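/- arXiv:2106.09519 — 2 statements merged into one kernel-verified Lean document; each statement's English description precedes it below -/
import Mathlib

section
/- Let M be a graded R-module and K a graded submodule of M. Then qp-V^g_M(K) = qp-V^g_M(Gr((K:_R M))M). -/
section ModuleDefs

variable {G R M : Type*} [AddGroup G] [DecidableEq G] [CommRing R]
  [AddCommGroup M] [Module R M]
  (𝒜 : G → AddSubgroup R) [GradedRing 𝒜]
  (ℳ : G → AddSubgroup M) [DirectSum.Decomposition ℳ] [SetLike.GradedSMul 𝒜 ℳ]

def gradedRadical (I : Ideal R) : Set R :=
  {r : R | ∀ g : G, ∃ n : ℕ, 0 < n ∧ (DirectSum.decompose 𝒜 r g : R) ^ n ∈ I}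

/-- A graded submodule: contains the homogeneous components of all its elements. -/
def IsGradedSubmodule (N : Submodule R M) : Prop :=
  ∀ (g : G) ⦃m : M⦄, m ∈ N → (DirectSum.decompose ℳ m g : M) ∈ N

def IsGradedPrimeIdeal (P : Ideal R) : Prop :=
  P ≠ ⊤ ∧ (∀ (g : G) ⦃r : R⦄, r ∈ P → (DirectSum.decompose 𝒜 r g : R) ∈ P) ∧
    ∀ ⦃r s : R⦄, SetLike.IsHomogeneousElem 𝒜 r → SetLike.IsHomogeneousElem 𝒜 s →
      r * s ∈ P → r ∈ P ∨ s ∈ P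

/-- A graded prime submodule `P`: proper graded, and `r • m ∈ P` for homogeneous `r, m`
implies `m ∈ P` or `r ∈ (P :_R M)`. -/
def IsGradedPrimeSubmodule (P : Submodule R M) : Prop :=
  P ≠ ⊤ ∧ IsGradedSubmodule ℳ P ∧
    ∀ ⦃r : R⦄ ⦃m : M⦄, SetLike.IsHomogeneousElem 𝒜 r → SetLike.IsHomogeneousElem ℳ m →
      r • m ∈ P → m ∈ P ∨ r ∈ P.colon ⊤

/-- The graded radical `Gr_M(Q)` of a submodule: the intersection of all graded prime
submodules containing `Q` (equal to `M` if there are none). -/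
def gradedRadicalSubmodule (Q : Submodule R M) : Submodule R M :=
  sInf {P : Submodule R M | IsGradedPrimeSubmodule 𝒜 ℳ P ∧ Q ≤ P}

/-- A graded quasi-primary submodule `Q`: proper graded, and `r • m ∈ Q` for homogeneous
`r, m` implies `r ∈ Gr((Q :_R M))` or `m ∈ Gr_M(Q)`. -/
def IsGradedQuasiPrimarySubmodule (Q : Submodule R M) : Prop :=
  Q ≠ ⊤ ∧ IsGradedSubmodule ℳ Q ∧
    ∀ ⦃r : R⦄ ⦃m : M⦄, SetLike.IsHomogeneousElem 𝒜 r → SetLike.IsHomogeneousElem ℳ m →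
      r • m ∈ Q → r ∈ gradedRadical 𝒜 (Q.colon ⊤) ∨ m ∈ gradedRadicalSubmodule 𝒜 ℳ Q

/-- `K` satisfies the graded primeful property if every graded prime ideal containing
`(K :_R M)` is of the form `(P :_R M)` for a graded prime submodule `P ⊇ K`. -/
def SatisfiesGradedPrimeful (K : Submodule R M) : Prop :=
  ∀ p : Ideal R, IsGradedPrimeIdeal 𝒜 p → K.colon ⊤ ≤ p →
    ∃ P : Submodule R M, IsGradedPrimeSubmodule 𝒜 ℳ P ∧ K ≤ P ∧ P.colon ⊤ = p

/-- The graded quasi-primary spectrum of `M`: the graded quasi-primary submodules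
satisfying the graded primeful property. -/
def qpSpec : Set (Submodule R M) :=
  {Q : Submodule R M | IsGradedQuasiPrimarySubmodule 𝒜 ℳ Q ∧ SatisfiesGradedPrimeful 𝒜 ℳ Q}

/-- The variety `qp-V^g_M(K) = { Q ∈ qp.Spec_g(M) : Gr((Q:_R M)) ⊇ Gr((K:_R M)) }`. -/
def qpV (K : Submodule R M) : Set (qpSpec 𝒜 ℳ) :=
  {Q : qpSpec 𝒜 ℳ | gradedRadical 𝒜 (K.colon ⊤) ⊆ gradedRadical 𝒜 (Q.1.colon ⊤)}

/-- The quasi-Zariski topology on `qp.Spec_g(M)`, generated by the complements of the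
varieties of graded submodules. -/
def qpZariski : TopologicalSpace (qpSpec 𝒜 ℳ) :=
  TopologicalSpace.generateFrom
    {U : Set (qpSpec 𝒜 ℳ) | ∃ K : Submodule R M, IsGradedSubmodule ℳ K ∧ U = (qpV 𝒜 ℳ K)ᶜ}


section Aux

variable {G R M : Type*} [AddGroup G] [DecidableEq G] [CommRing R]
  [AddCommGroup M] [Module R M]
  (𝒜 : G → AddSubgroup R) [GradedRing 𝒜]
  (ℳ : G → AddSubgroup M) [DirectSum.Decomposition ℳ] [SetLike.GradedSMul 𝒜 ℳ]

open DirectSum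

/-- Component of a homogeneous smul. -/
lemma aux_decompose_smul_of_mem (r : R) {m : M} {h : G} (hm : m ∈ ℳ h) (g : G) :
    (decompose ℳ (r • m) (g + h) : M) = (decompose 𝒜 r g : R) • m := by
  refine DirectSum.Decomposition.inductionOn 𝒜
    (motive := fun r => ((decompose ℳ (r • m) (g + h) : M) = (decompose 𝒜 r g : R) • m))
    ?_ (fun {k} x => ?_) (fun a b ha hb => ?_) r
  · simp
  · obtain ⟨x, hx⟩ := x
    show (decompose ℳ (x • m) (g + h) : M) = (decompose 𝒜 x g : R) • m
    by_cases hgk : k = g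
    · subst hgk
      have h1 : (decompose ℳ (x • m) (k + h) : M) = x • m :=
        decompose_of_mem_same ℳ (SetLike.GradedSMul.smul_mem hx hm)
      rw [h1, decompose_of_mem_same 𝒜 hx]
    · have h1 : (decompose ℳ (x • m) (g + h) : M) = 0 :=
        decompose_of_mem_ne ℳ (SetLike.GradedSMul.smul_mem hx hm)
          (fun hc => hgk (by exact add_right_cancel hc))
      rw [h1, decompose_of_mem_ne 𝒜 hx hgk, zero_smul]
  · show (decompose ℳ ((a + b) • m) (g + h) : M) = (decompose 𝒜 (a + b) g : R) • m
    rw [add_smul, decompose_add, decompose_add, DirectSum.add_apply,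
      DirectSum.add_apply, AddSubgroup.coe_add, AddSubgroup.coe_add, add_smul]
    exact congrArg₂ (· + ·) ha hb

/-- homogeneous powers in a graded prime ideal. -/
lemma aux_pow_mem_gradedPrime {p : Ideal R} (hp : IsGradedPrimeIdeal 𝒜 p) {x : R}
    (hx : SetLike.IsHomogeneousElem 𝒜 x) : ∀ {n : ℕ}, 0 < n → x ^ n ∈ p → x ∈ p := by
  intro n
  induction n with
  | zero => intro h; exact absurd h (lt_irrefl 0)
  | succ n ih =>
    intro _ hxn
    rcases Nat.eq_zero_or_pos n with hn | hn
    · subst hn; rwa [pow_one] at hxn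
    · rw [pow_succ] at hxn
      obtain ⟨i, hi⟩ := hx
      rcases hp.2.2 ⟨n • i, SetLike.pow_mem_graded n hi⟩ ⟨i, hi⟩ hxn with h | h
      · exact ih hn h
      · exact h

lemma aux_gradedRadical_le_prime {I p : Ideal R} (hp : IsGradedPrimeIdeal 𝒜 p)
    (hIp : I ≤ p) : gradedRadical 𝒜 I ⊆ ↑p := by
  classical
  intro r hr
  show r ∈ p
  rw [← DirectSum.sum_support_decompose 𝒜 r]
  refine Ideal.sum_mem p fun g _ => ?_
  obtain ⟨n, hn, h⟩ := hr g
  exact aux_pow_mem_gradedPrime 𝒜 hp ⟨g, SetLike.coe_mem _⟩ hn (hIp h)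

/-- components of elements of the graded radical lie in the graded radical. -/
lemma aux_decompose_mem_gradedRadical {I : Ideal R} {r : R} (hr : r ∈ gradedRadical 𝒜 I)
    (g : G) : (decompose 𝒜 r g : R) ∈ gradedRadical 𝒜 I := by
  intro g'
  by_cases hg : g' = g
  · subst hg
    obtain ⟨n, hn, h⟩ := hr g'
    exact ⟨n, hn, by rwa [decompose_of_mem_same 𝒜 (SetLike.coe_mem _)]⟩
  · exact ⟨1, one_pos, by
      rw [decompose_of_mem_ne 𝒜 (SetLike.coe_mem (decompose 𝒜 r g)) (Ne.symm hg), pow_one]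
      exact I.zero_mem⟩

/-- a graded ideal disjoint from all positive powers of a homogeneous element `x`
is contained in a graded prime ideal avoiding `x`. -/
lemma aux_exists_gradedPrime {I : Ideal R}
    (hI : ∀ (g : G) ⦃r : R⦄, r ∈ I → (decompose 𝒜 r g : R) ∈ I) {x : R}
    (hx : SetLike.IsHomogeneousElem 𝒜 x) (hxI : ∀ n : ℕ, 0 < n → x ^ n ∉ I) :
    ∃ p : Ideal R, IsGradedPrimeIdeal 𝒜 p ∧ I ≤ p ∧ x ∉ p := by
  set S : Set (Ideal R) :=
    {J | (∀ (g : G) ⦃r : R⦄, r ∈ J → (decompose 𝒜 r g : R) ∈ J) ∧ I ≤ J ∧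
      ∀ n : ℕ, 0 < n → x ^ n ∉ J} with hS
  obtain ⟨J, hIJ, hJS, hJmax⟩ := zorn_le_nonempty₀ S (fun c hcS hc y hy => by
      refine ⟨sSup c, ⟨?_, ?_, ?_⟩, fun z hz => le_sSup hz⟩
      · intro g r hr
        obtain ⟨J, hJ, hrJ⟩ := (Submodule.mem_sSup_of_directed ⟨y, hy⟩ hc.directedOn).1 hr
        exact le_sSup hJ ((hcS hJ).1 g hrJ)
      · exact le_trans (hcS hy).2.1 (le_sSup hy)
      · intro n hn hmem
        obtain ⟨J, hJ, hrJ⟩ := (Submodule.mem_sSup_of_directed ⟨y, hy⟩ hc.directedOn).1 hmem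
        exact (hcS hJ).2.2 n hn hrJ)
    I ⟨hI, le_rfl, hxI⟩
  -- key: enlarging J with a homogeneous element not in J captures a power of x
  have key : ∀ a : R, SetLike.IsHomogeneousElem 𝒜 a → a ∉ J →
      ∃ n : ℕ, 0 < n ∧ x ^ n ∈ J ⊔ Ideal.span {a} := by
    intro a ha haJ
    by_contra hcon
    push_neg at hcon
    have hmem : J ⊔ Ideal.span {a} ∈ S := by
      refine ⟨?_, le_trans hJS.2.1 le_sup_left, fun n hn h => hcon n hn h⟩
      intro g r hr
      obtain ⟨u, hu, v, hv, rfl⟩ := Submodule.mem_sup.1 hr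
      rw [decompose_add, DirectSum.add_apply, AddSubgroup.coe_add]
      refine Submodule.add_mem _ (le_sup_left (α := Ideal R) (hJS.1 g hu)) ?_
      obtain ⟨c, rfl⟩ := Ideal.mem_span_singleton'.1 hv
      obtain ⟨d, hd⟩ := ha
      have : (decompose 𝒜 (c * a) ((g - d) + d) : R) = (decompose 𝒜 c (g - d) : R) * a := by
        have := aux_decompose_smul_of_mem 𝒜 𝒜 c hd (g - d)
        simpa [smul_eq_mul] using this
      rw [show g = (g - d) + d by rw [sub_add_cancel], this]
      exact le_sup_right (α := Ideal R)
        (Ideal.mem_span_singleton'.2 ⟨(decompose 𝒜 c (g - d) : R), rfl⟩)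
    have hle : J ⊔ Ideal.span {a} ≤ J := hJmax hmem le_sup_left
    exact haJ (hle (le_sup_right (α := Ideal R) (Ideal.mem_span_singleton_self a)))
  refine ⟨J, ⟨?_, hJS.1, ?_⟩, hJS.2.1, fun h => hJS.2.2 1 one_pos (by rwa [pow_one])⟩
  · intro hJtop
    exact hJS.2.2 1 one_pos (by rw [hJtop]; trivial)
  · intro a b ha hb hab
    by_contra hcon
    push_neg at hcon
    obtain ⟨n, hn, hna⟩ := key a ha hcon.1
    obtain ⟨m, hm, hmb⟩ := key b hb hcon.2
    obtain ⟨ya, hya, za, hza, hae⟩ := Submodule.mem_sup.1 hna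
    obtain ⟨yb, hyb, zb, hzb, hbe⟩ := Submodule.mem_sup.1 hmb
    obtain ⟨ca, rfl⟩ := Ideal.mem_span_singleton'.1 hza
    obtain ⟨cb, rfl⟩ := Ideal.mem_span_singleton'.1 hzb
    refine hJS.2.2 (n + m) (Nat.add_pos_left hn m) ?_
    rw [pow_add, ← hae, ← hbe]
    have : (ya + ca * a) * (yb + cb * b) =
        ya * (yb + cb * b) + (ca * a) * yb + (ca * cb) * (a * b) := by ring
    rw [this]
    exact J.add_mem (J.add_mem (Ideal.mul_mem_right _ J hya) (Ideal.mul_mem_left J _ hyb))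
      (Ideal.mul_mem_left J _ hab)

/-- the colon ideal of a graded submodule is graded. -/
lemma aux_colon_graded {Q : Submodule R M} (hQ : IsGradedSubmodule ℳ Q) :
    ∀ (g : G) ⦃r : R⦄, r ∈ Q.colon ⊤ → (decompose 𝒜 r g : R) ∈ Q.colon ⊤ := by
  classical
  intro g r hr
  rw [Submodule.mem_colon]
  intro m _
  have hm : m = ∑ h ∈ (decompose ℳ m).support, (decompose ℳ m h : M) :=
    (DirectSum.sum_support_decompose ℳ m).symm
  rw [hm, Finset.smul_sum]
  refine Submodule.sum_mem Q fun h _ => ?_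
  rw [← aux_decompose_smul_of_mem 𝒜 ℳ r (SetLike.coe_mem (decompose ℳ m h)) g]
  exact hQ (g + h) (Submodule.mem_colon.1 hr _ trivial)

end Aux


/-- For a graded submodule `K` of `M`, `qp-V^g_M(K) = qp-V^g_M(Gr((K :_R M)) M)`. -/
theorem qpV_eq_qpV_gradedRadical_smul (K : Submodule R M) (hK : IsGradedSubmodule ℳ K) :
    qpV 𝒜 ℳ K =
      qpV 𝒜 ℳ (Ideal.span (gradedRadical 𝒜 (K.colon ⊤)) • (⊤ : Submodule R M)) := by
  ext Q
  simp only [qpV, Set.mem_setOf_eq]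
  constructor
  · -- Gr(K:M) ⊆ Gr(Q:M)  implies  Gr((JM):M) ⊆ Gr(Q:M)
    intro hsub r hr
    intro g
    by_contra hcon
    push_neg at hcon
    have hcon' : ∀ n : ℕ, 0 < n → (DirectSum.decompose 𝒜 r g : R) ^ n ∉ Q.1.colon ⊤ := by
      intro n hn h; exact (hcon n hn h).elim
    have hQgraded : IsGradedSubmodule ℳ Q.1 := Q.2.1.2.1
    obtain ⟨p, hp, hQp, hxp⟩ := aux_exists_gradedPrime 𝒜 (aux_colon_graded 𝒜 ℳ hQgraded)
      ⟨g, SetLike.coe_mem _⟩ hcon'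
    obtain ⟨P, hP, hQP, hPp⟩ := Q.2.2 p hp hQp
    have hJp : Ideal.span (gradedRadical 𝒜 (K.colon ⊤)) ≤ p := by
      rw [Ideal.span_le]
      exact fun x hx => aux_gradedRadical_le_prime 𝒜 hp hQp (hsub hx)
    have hJM : Ideal.span (gradedRadical 𝒜 (K.colon ⊤)) • (⊤ : Submodule R M) ≤ P := by
      refine Submodule.smul_le.2 fun j hj m _ => ?_
      have : j ∈ P.colon ⊤ := hPp ▸ hJp hj
      exact Submodule.mem_colon.1 this m trivial
    obtain ⟨n, hn, hmem⟩ := hr g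
    have : (DirectSum.decompose 𝒜 r g : R) ^ n ∈ p := by
      rw [← hPp]
      rw [Submodule.mem_colon] at hmem ⊢
      exact fun m hm => hJM (hmem m hm)
    exact hxp (aux_pow_mem_gradedPrime 𝒜 hp ⟨g, SetLike.coe_mem _⟩ hn this)
  · -- Gr((JM):M) ⊆ Gr(Q:M)  implies  Gr(K:M) ⊆ Gr(Q:M)
    intro hsub r hr
    refine hsub ?_
    intro g
    refine ⟨1, one_pos, ?_⟩
    rw [pow_one, Submodule.mem_colon]
    intro m _
    have hg : (DirectSum.decompose 𝒜 r g : R) ∈ Ideal.span (gradedRadical 𝒜 (K.colon ⊤)) :=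
      Ideal.subset_span (aux_decompose_mem_gradedRadical 𝒜 hr g)
    exact Submodule.smul_mem_smul hg trivial


end ModuleDefs
end

section
/- Let M be a graded R-module. The space (qp.Spec_g(M), q.τ^g) is a T_0-space if and only if the natural map φ: qp.Spec_g(M) → Spec_g(R/Ann(M)), Q ↦ Gr((Q:_R M))/Ann(M), is injective. -/
section ModuleDefs

variable {G R M : Type*} [AddGroup G] [DecidableEq G] [CommRing R]
  [AddCommGroup M] [Module R M]
  (𝒜 : G → AddSubgroup R) [GradedRing 𝒜]
  (ℳ : G → AddSubgroup M) [DirectSum.Decomposition ℳ] [SetLike.GradedSMul 𝒜 ℳ]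

open DirectSum

lemma mem_gradedRadical_iff' (I : Ideal R) (r : R) :
    r ∈ gradedRadical 𝒜 I ↔ ∀ g : G, (decompose 𝒜 r g : R) ∈ I.radical := by
  constructor
  · intro h g; obtain ⟨n, _, hn⟩ := h g; exact ⟨n, hn⟩
  · intro h g
    obtain ⟨n, hn⟩ := h g
    rcases Nat.eq_zero_or_pos n with rfl | hpos
    · rw [pow_zero] at hn
      refine ⟨1, one_pos, ?_⟩
      rw [pow_one]
      simpa using I.mul_mem_left (decompose 𝒜 r g : R) hn
    · exact ⟨n, hpos, hn⟩

/-- `gradedRadical 𝒜 I` as an ideal. -/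
def gradedRadicalIdeal (I : Ideal R) : Ideal R where
  carrier := gradedRadical 𝒜 I
  zero_mem' := (mem_gradedRadical_iff' 𝒜 I 0).2 fun g => by
    rw [decompose_zero]
    simp only [DirectSum.zero_apply, ZeroMemClass.coe_zero]
    exact I.radical.zero_mem
  add_mem' := fun {a b} ha hb => (mem_gradedRadical_iff' 𝒜 I _).2 fun g => by
    rw [decompose_add, DirectSum.add_apply, AddSubgroup.coe_add]
    exact I.radical.add_mem ((mem_gradedRadical_iff' 𝒜 I a).1 ha g)
      ((mem_gradedRadical_iff' 𝒜 I b).1 hb g)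
  smul_mem' := fun c r hr => (mem_gradedRadical_iff' 𝒜 I _).2 fun g => by
    classical
    rw [smul_eq_mul, DirectSum.decompose_mul, DirectSum.coe_mul_apply]
    exact Ideal.sum_mem _ fun ij _ =>
      I.radical.mul_mem_left _ ((mem_gradedRadical_iff' 𝒜 I r).1 hr ij.2)

lemma coe_gradedRadicalIdeal (I : Ideal R) :
    (gradedRadicalIdeal 𝒜 I : Set R) = gradedRadical 𝒜 I := rfl

lemma span_gradedRadical (I : Ideal R) :
    Ideal.span (gradedRadical 𝒜 I) = gradedRadicalIdeal 𝒜 I := by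
  rw [← coe_gradedRadicalIdeal]
  exact Submodule.span_eq _

include ℳ in
lemma decompose_mem_annihilator {r : R} (hr : r ∈ (⊤ : Submodule R M).annihilator) (g : G) :
    (decompose 𝒜 r g : R) ∈ (⊤ : Submodule R M).annihilator := by
  classical
  rw [Submodule.mem_annihilator] at hr ⊢
  have key : ∀ (h : G) (m : M), m ∈ ℳ h → (decompose 𝒜 r g : R) • m = 0 := by
    intro h m hm
    have h1 : r • m = 0 := hr m trivial
    have h2 : (decompose ℳ (r • m) (g + h) : M) = (decompose 𝒜 r g : R) • m := by
      conv_lhs => rw [← DirectSum.sum_support_decompose 𝒜 r, Finset.sum_smul, decompose_sum]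
      rw [DFinsupp.finset_sum_apply, AddSubmonoidClass.coe_finset_sum]
      rw [Finset.sum_eq_single g]
      · have hmem : ((decompose 𝒜 r g : R)) • m ∈ ℳ (g + h) := by
          have := SetLike.GradedSMul.smul_mem (SetLike.coe_mem (decompose 𝒜 r g)) hm
          rwa [vadd_eq_add] at this
        exact DirectSum.decompose_of_mem_same ℳ hmem
      · intro b _ hbg
        have hmem : ((decompose 𝒜 r b : R)) • m ∈ ℳ (b + h) := by
          have := SetLike.GradedSMul.smul_mem (SetLike.coe_mem (decompose 𝒜 r b)) hm
          rwa [vadd_eq_add] at this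
        exact DirectSum.decompose_of_mem_ne ℳ hmem
          (fun hc => hbg (add_right_cancel hc))
      · intro hg
        rw [DFinsupp.notMem_support_iff.1 hg]
        simp
    rw [h1, decompose_zero] at h2
    simpa using h2.symm
  have main : ∀ m : M, (decompose 𝒜 r g : R) • m = 0 := by
    intro m
    induction m using DirectSum.Decomposition.inductionOn ℳ with
    | zero => simp
    | homogeneous m' => exact key _ _ (SetLike.coe_mem m')
    | add m₁ m₂ h₁ h₂ => rw [smul_add, h₁, h₂, add_zero]
  exact fun m _ => main m

include ℳ in
lemma annihilator_le_gradedRadical_colon (Q : Submodule R M) :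
    ((⊤ : Submodule R M).annihilator : Set R) ⊆ gradedRadical 𝒜 (Q.colon ⊤) := by
  intro r hr
  refine (mem_gradedRadical_iff' 𝒜 _ r).2 fun g => Ideal.le_radical ?_
  rw [Submodule.mem_colon]
  intro m _
  have := decompose_mem_annihilator 𝒜 ℳ hr g
  rw [Submodule.mem_annihilator] at this
  rw [this m trivial]
  exact Q.zero_mem


/-- The quasi-Zariski space `qp.Spec_g(M)` is `T₀` iff the natural map
`φ : qp.Spec_g(M) → Spec_g(R/Ann(M))`, `Q ↦ Gr((Q :_R M))/Ann(M)`, is injective. -/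
theorem t0Space_iff_natural_map_injective :
    @T0Space (qpSpec 𝒜 ℳ) (qpZariski 𝒜 ℳ) ↔
      Function.Injective (fun Q : qpSpec 𝒜 ℳ =>
        Ideal.map (Ideal.Quotient.mk ((⊤ : Submodule R M).annihilator))
          (Ideal.span (gradedRadical 𝒜 (Q.1.colon ⊤)))) := by
  classical
  set f : qpSpec 𝒜 ℳ → Set R := fun Q => gradedRadical 𝒜 (Q.1.colon ⊤) with hf
  -- Inseparability is equivalent to equality of graded radicals of colon ideals
  have step1 : ∀ Q P : qpSpec 𝒜 ℳ,
      @Inseparable _ (qpZariski 𝒜 ℳ) Q P ↔ f Q = f P := by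
    intro Q P
    constructor
    · intro h
      have hopen : ∀ (K : Submodule R M), IsGradedSubmodule ℳ K →
          @IsOpen _ (qpZariski 𝒜 ℳ) (qpV 𝒜 ℳ K)ᶜ := fun K hK =>
        TopologicalSpace.GenerateOpen.basic _ ⟨K, hK, rfl⟩
      have h' := (@inseparable_iff_forall_isOpen _ (qpZariski 𝒜 ℳ) Q P).1 h
      have h1 := not_iff_not.2 (h' _ (hopen Q.1 Q.2.1.2.1))
      have h2 := not_iff_not.2 (h' _ (hopen P.1 P.2.1.2.1))
      simp only [Set.mem_compl_iff, not_not] at h1 h2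
      have hQQ : Q ∈ qpV 𝒜 ℳ Q.1 := by
        simp only [qpV, Set.mem_setOf_eq]
        exact subset_refl _
      have hPP : P ∈ qpV 𝒜 ℳ P.1 := by
        simp only [qpV, Set.mem_setOf_eq]
        exact subset_refl _
      exact Set.Subset.antisymm (h1.1 hQQ) (h2.2 hPP)
    · intro hfe
      rw [@inseparable_iff_forall_isOpen _ (qpZariski 𝒜 ℳ)]
      intro s hs
      induction hs with
      | basic U hU =>
        obtain ⟨K, -, rfl⟩ := hU
        have he : gradedRadical 𝒜 ((Q.1).colon ⊤) = gradedRadical 𝒜 ((P.1).colon ⊤) := hfe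
        simp only [Set.mem_compl_iff, qpV, Set.mem_setOf_eq, he]
      | univ => simp
      | inter s t _ _ ih1 ih2 => exact and_congr ih1 ih2
      | sUnion S _ ih =>
        simp only [Set.mem_sUnion]
        exact exists_congr fun t => and_congr_right fun ht => ih t ht
  -- Equality of images under φ is equivalent to equality of graded radicals
  have step2 : ∀ Q P : qpSpec 𝒜 ℳ,
      Ideal.map (Ideal.Quotient.mk ((⊤ : Submodule R M).annihilator))
          (Ideal.span (gradedRadical 𝒜 (Q.1.colon ⊤))) =
        Ideal.map (Ideal.Quotient.mk ((⊤ : Submodule R M).annihilator))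
          (Ideal.span (gradedRadical 𝒜 (P.1.colon ⊤))) ↔ f Q = f P := by
    intro Q P
    constructor
    · intro h
      have hc := congrArg (Ideal.comap (Ideal.Quotient.mk ((⊤ : Submodule R M).annihilator))) h
      rw [Ideal.comap_map_of_surjective _ Ideal.Quotient.mk_surjective,
        Ideal.comap_map_of_surjective _ Ideal.Quotient.mk_surjective] at hc
      have hker : Ideal.comap (Ideal.Quotient.mk ((⊤ : Submodule R M).annihilator))
          (⊥ : Ideal (R ⧸ (⊤ : Submodule R M).annihilator)) =
          (⊤ : Submodule R M).annihilator := by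
        rw [← RingHom.ker_eq_comap_bot, Ideal.mk_ker]
      rw [hker] at hc
      have hle : ∀ N : Submodule R M, (⊤ : Submodule R M).annihilator ≤
          Ideal.span (gradedRadical 𝒜 (N.colon ⊤)) := fun N x hx =>
        Ideal.subset_span (annihilator_le_gradedRadical_colon 𝒜 ℳ N hx)
      rw [sup_eq_left.2 (hle Q.1), sup_eq_left.2 (hle P.1)] at hc
      rw [span_gradedRadical, span_gradedRadical] at hc
      have := congrArg (fun I : Ideal R => (I : Set R)) hc
      exact this
    · intro h
      simp only [hf] at h
      rw [h]
  rw [@t0Space_iff_inseparable (qpSpec 𝒜 ℳ) (qpZariski 𝒜 ℳ)]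
  constructor
  · intro hT0 Q P hQP
    exact hT0 Q P ((step1 Q P).2 ((step2 Q P).1 hQP))
  · intro hinj Q P hins
    exact hinj ((step2 Q P).2 ((step1 Q P).1 hins))

end ModuleDefs
end
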